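/- Let F be a finite field with q elements, and let n ≥ 1, r ≤ n, and t ≤ n²/2 be natural numbers. Then the number of n×n matrices M over F for which there exists an n×n matrix S over F with at most t nonzero entries such that rank(M + S) ≤ r is at most q^(2rn) · (t+1) · C(n², t) · q^t, where C(n², t) is the binomial coefficient. -/

import Mathlib

/-- The number of nonzero entries of a matrix. -/
def nonzeroEntries {n : ℕ} {F : Type*} [Zero F] [DecidableEq F]
    (S : Matrix (Fin n) (Fin n) F) : ℕ :=
  (Finset.univ.filter (fun p : Fin n × Fin n => S p.1 p.2 ≠ 0)).card

/-- Rank factorization: a matrix of rank at most `r` is a product of an `n × r`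
and an `r × n` matrix. -/
lemma exists_rank_factorization {n r : ℕ} {F : Type} [Field F]
    (A : Matrix (Fin n) (Fin n) F) (h : A.rank ≤ r) :
    ∃ (L : Matrix (Fin n) (Fin r) F) (R : Matrix (Fin r) (Fin n) F), A = L * R := by
  classical
  set W := LinearMap.range A.mulVecLin with hW
  have hd : Module.finrank F W ≤ r := h
  let b : Module.Basis (Fin (Module.finrank F W)) F W := Module.finBasis F W
  have hcol : ∀ j : Fin n, (fun i => A i j) ∈ W := by
    intro j
    refine ⟨Pi.single j 1, ?_⟩
    ext i
    simp [Matrix.mulVecLin, Matrix.mulVec, dotProduct, Pi.single_apply]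
  let L : Matrix (Fin n) (Fin r) F := fun i k =>
    if hk : (k : ℕ) < Module.finrank F W then (b ⟨k, hk⟩ : Fin n → F) i else 0
  let R : Matrix (Fin r) (Fin n) F := fun k j =>
    if hk : (k : ℕ) < Module.finrank F W then b.repr ⟨_, hcol j⟩ ⟨k, hk⟩ else 0
  refine ⟨L, R, ?_⟩
  ext i j
  have hsum : (⟨fun i => A i j, hcol j⟩ : W) =
      ∑ k : Fin (Module.finrank F W), b.repr ⟨fun i => A i j, hcol j⟩ k • b k := by
    rw [Module.Basis.sum_repr]
  have hA : A i j = ∑ k : Fin (Module.finrank F W),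
      b.repr ⟨fun i => A i j, hcol j⟩ k * (b k : Fin n → F) i := by
    have := congrArg (fun (w : W) => (w : Fin n → F) i) hsum
    simpa only [Submodule.coe_mk, Subtype.coe_mk, Submodule.coe_sum, Submodule.coe_smul,
      Finset.sum_apply, Pi.smul_apply, smul_eq_mul] using this
  rw [Matrix.mul_apply, hA]
  symm
  rw [← Finset.sum_subset (Finset.subset_univ (Finset.univ.map (Fin.castLEEmb hd)))
      ?_, Finset.sum_map]
  · apply Finset.sum_congr rfl
    intro k _
    have hk : ((Fin.castLEEmb hd k : Fin r) : ℕ) < Module.finrank F W := k.isLt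
    simp only [L, R, dif_pos hk]
    rw [mul_comm]
    congr 1 <;> congr 1 <;> exact Fin.ext rfl
  · intro k _ hk
    have hk' : ¬ (k : ℕ) < Module.finrank F W := by
      intro hlt
      exact hk (Finset.mem_map.mpr ⟨⟨k, hlt⟩, Finset.mem_univ _, Fin.ext rfl⟩)
    simp [L, hk']

/-- The binomial coefficient is monotone below the middle. -/
lemma choose_mono_of_le_half {N s t : ℕ} (hs : s ≤ t) (ht : 2 * t ≤ N) :
    N.choose s ≤ N.choose t := by
  induction t with
  | zero => simp_all
  | succ t ih =>
    rcases Nat.eq_or_lt_of_le hs with rfl | hlt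
    · exact le_rfl
    · have hst : s ≤ t := Nat.lt_succ_iff.mp hlt
      have h2 : 2 * t ≤ N := by omega
      refine (ih hst h2).trans (Nat.choose_le_succ_of_lt_half_left ?_)
      omega

/-- The number of `t`-sparse matrices is at most `(t+1) · C(n², t) · q^t`. -/
lemma card_sparse_le {n t q : ℕ} {F : Type} [Field F] [Fintype F] [DecidableEq F]
    (hq : Fintype.card F = q) (ht : 2 * t ≤ n ^ 2) :
    Fintype.card {S : Matrix (Fin n) (Fin n) F // nonzeroEntries S ≤ t}
      ≤ (t + 1) * Nat.choose (n ^ 2) t * q ^ t := by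
  classical
  have hq1 : 1 ≤ q := hq ▸ Fintype.card_pos
  rw [Fintype.card_subtype]
  set supp : Matrix (Fin n) (Fin n) F → Finset (Fin n × Fin n) :=
    fun S => Finset.univ.filter (fun p => S p.1 p.2 ≠ 0) with hsupp
  set T : Finset (Finset (Fin n × Fin n)) :=
    Finset.univ.filter (fun A => A.card ≤ t) with hT
  have hmem : ∀ S ∈ Finset.univ.filter
      (fun S : Matrix (Fin n) (Fin n) F => nonzeroEntries S ≤ t), supp S ∈ T := by
    intro S hS
    simp only [hT, Finset.mem_filter, Finset.mem_univ, true_and] at hS ⊢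
    exact hS
  rw [Finset.card_eq_sum_card_fiberwise hmem]
  have hfiber : ∀ A ∈ T, ((Finset.univ.filter
      (fun S : Matrix (Fin n) (Fin n) F => nonzeroEntries S ≤ t)).filter
      (fun S => supp S = A)).card ≤ q ^ t := by
    intro A hA
    have hAt : A.card ≤ t := by simpa [hT] using hA
    have : ((Finset.univ.filter
        (fun S : Matrix (Fin n) (Fin n) F => nonzeroEntries S ≤ t)).filter
        (fun S => supp S = A)).card ≤ Fintype.card (A → F) := by
      rw [← Finset.card_univ]
      apply Finset.card_le_card_of_injOn (fun S (p : A) => S p.1.1 p.1.2)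
        (fun _ _ => Finset.mem_univ _)
      intro S1 h1 S2 h2 hEq
      simp only [Finset.mem_coe, Finset.mem_filter] at h1 h2
      ext i j
      by_cases hij : (i, j) ∈ A
      · exact congrFun hEq ⟨(i, j), hij⟩
      · have z1 : S1 i j = 0 := by
          by_contra hz
          exact hij (h1.2 ▸ (by simp [hsupp, hz] : (i, j) ∈ supp S1))
        have z2 : S2 i j = 0 := by
          by_contra hz
          exact hij (h2.2 ▸ (by simp [hsupp, hz] : (i, j) ∈ supp S2))
        rw [z1, z2]
    refine this.trans ?_
    rw [Fintype.card_fun, hq, Fintype.card_coe]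
    exact Nat.pow_le_pow_right hq1 hAt
  calc ∑ A ∈ T, ((Finset.univ.filter
      (fun S : Matrix (Fin n) (Fin n) F => nonzeroEntries S ≤ t)).filter
      (fun S => supp S = A)).card ≤ ∑ _A ∈ T, q ^ t := Finset.sum_le_sum hfiber
    _ = T.card * q ^ t := by rw [Finset.sum_const, smul_eq_mul]
    _ ≤ ((t + 1) * Nat.choose (n ^ 2) t) * q ^ t := by
        gcongr
        have hmem2 : ∀ A ∈ T, A.card ∈ Finset.range (t + 1) := by
          intro A hA
          simp only [hT, Finset.mem_filter] at hA
          simpa [Nat.lt_succ_iff] using hA.2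
        rw [Finset.card_eq_sum_card_fiberwise hmem2]
        have : ∀ s ∈ Finset.range (t + 1),
            (T.filter (fun A => A.card = s)).card ≤ Nat.choose (n ^ 2) t := by
          intro s hs
          have hst : s ≤ t := Nat.lt_succ_iff.mp (Finset.mem_range.mp hs)
          have hsub : T.filter (fun A => A.card = s) ⊆
              Finset.univ.powersetCard s := by
            intro A hA
            simp only [hT, Finset.mem_filter] at hA
            rw [Finset.mem_powersetCard]
            exact ⟨Finset.subset_univ _, hA.2⟩
          refine (Finset.card_le_card hsub).trans ?_
          rw [Finset.card_powersetCard, Finset.card_univ, Fintype.card_prod,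
            Fintype.card_fin, ← sq]
          exact choose_mono_of_le_half hst ht
        calc ∑ s ∈ Finset.range (t + 1), (T.filter (fun A => A.card = s)).card
            ≤ ∑ _s ∈ Finset.range (t + 1), Nat.choose (n ^ 2) t :=
              Finset.sum_le_sum this
          _ = (t + 1) * Nat.choose (n ^ 2) t := by
              rw [Finset.sum_const, Finset.card_range, smul_eq_mul]
    _ = (t + 1) * Nat.choose (n ^ 2) t * q ^ t := rfl

/-- **Counting non-rigid matrices.** Let `F` be a finite field with `q` elements, and
`n ≥ 1`, `r ≤ n`, `t ≤ n²/2`. The number of `n × n` matrices `M` over `F` such that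
`rank (M + S) ≤ r` for some matrix `S` with at most `t` nonzero entries is at most
`q^(2rn) · (t+1) · C(n², t) · q^t`. -/
theorem count_nonrigid_matrices (F : Type) [Field F] [Fintype F] [DecidableEq F]
    (q n r t : ℕ) (hq : Fintype.card F = q) (hn : 1 ≤ n) (hr : r ≤ n)
    (ht : 2 * t ≤ n ^ 2) :
    Nat.card {M : Matrix (Fin n) (Fin n) F |
        ∃ S : Matrix (Fin n) (Fin n) F, nonzeroEntries S ≤ t ∧ (M + S).rank ≤ r}
      ≤ q ^ (2 * r * n) * (t + 1) * Nat.choose (n ^ 2) t * q ^ t := by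
  classical
  have key : ∀ M : {M : Matrix (Fin n) (Fin n) F |
      ∃ S : Matrix (Fin n) (Fin n) F, nonzeroEntries S ≤ t ∧ (M + S).rank ≤ r},
      ∃ x : Matrix (Fin n) (Fin r) F × Matrix (Fin r) (Fin n) F ×
        {S : Matrix (Fin n) (Fin n) F // nonzeroEntries S ≤ t},
      (M : Matrix (Fin n) (Fin n) F) = x.1 * x.2.1 - (x.2.2 : Matrix (Fin n) (Fin n) F) := by
    intro M
    obtain ⟨S, hSt, hrank⟩ := M.2
    obtain ⟨L, R, hLR⟩ := exists_rank_factorization ((M : Matrix (Fin n) (Fin n) F) + S) hrank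
    exact ⟨(L, R, ⟨S, hSt⟩), eq_sub_of_add_eq hLR⟩
  choose f hf using key
  have hinj : Function.Injective f := by
    intro M1 M2 h
    apply Subtype.ext
    rw [hf M1, hf M2, h]
  have hle := Nat.card_le_card_of_injective f hinj
  have hL : Nat.card (Matrix (Fin n) (Fin r) F) = q ^ (r * n) := by
    show Nat.card (Fin n → Fin r → F) = q ^ (r * n)
    rw [Nat.card_fun, Nat.card_fun, Nat.card_eq_fintype_card (α := F), hq,
      Nat.card_eq_fintype_card (α := Fin n), Nat.card_eq_fintype_card (α := Fin r),
      Fintype.card_fin, Fintype.card_fin, ← pow_mul]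
  have hR : Nat.card (Matrix (Fin r) (Fin n) F) = q ^ (r * n) := by
    show Nat.card (Fin r → Fin n → F) = q ^ (r * n)
    rw [Nat.card_fun, Nat.card_fun, Nat.card_eq_fintype_card (α := F), hq,
      Nat.card_eq_fintype_card (α := Fin n), Nat.card_eq_fintype_card (α := Fin r),
      Fintype.card_fin, Fintype.card_fin, ← pow_mul, Nat.mul_comm n r]
  have hS : Nat.card {S : Matrix (Fin n) (Fin n) F // nonzeroEntries S ≤ t}
      ≤ (t + 1) * Nat.choose (n ^ 2) t * q ^ t := by
    rw [Nat.card_eq_fintype_card]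
    exact card_sparse_le hq ht
  rw [Nat.card_prod, Nat.card_prod, hL, hR] at hle
  calc Nat.card {M : Matrix (Fin n) (Fin n) F |
        ∃ S : Matrix (Fin n) (Fin n) F, nonzeroEntries S ≤ t ∧ (M + S).rank ≤ r}
      ≤ q ^ (r * n) * (q ^ (r * n) *
        Nat.card {S : Matrix (Fin n) (Fin n) F // nonzeroEntries S ≤ t}) := hle
    _ ≤ q ^ (r * n) * (q ^ (r * n) *
        ((t + 1) * Nat.choose (n ^ 2) t * q ^ t)) := by gcongr
    _ = q ^ (2 * r * n) * (t + 1) * Nat.choose (n ^ 2) t * q ^ t := by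
        rw [show 2 * r * n = r * n + r * n by ring, pow_add]
        ring
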